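/- There do not exist four pairwise orthogonal circles in the Euclidean plane. That is, there are no four circles such that every pair of them intersects orthogonally. -/

import Mathlib

open RealInnerProductSpace

lemma inner_sub_sub_helper (a b x : EuclideanSpace ℝ (Fin 2)) :
    (inner ℝ (a - x) (b - x) : ℝ) = (‖a - x‖ ^ 2 + ‖b - x‖ ^ 2 - ‖a - b‖ ^ 2) / 2 := by
  have h1 := norm_sub_sq_real (a - x) (b - x)
  have h2 : (a - x) - (b - x) = a - b := by abel
  rw [h2] at h1
  linarith

/-- There do not exist four pairwise orthogonal circles in the plane. -/
theorem no_four_pairwise_orthogonal_circles :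
    ¬ ∃ (c : Fin 4 → EuclideanSpace ℝ (Fin 2)) (r : Fin 4 → ℝ),
      (∀ i, 0 < r i) ∧
      (∀ i j, i ≠ j → r i ^ 2 + r j ^ 2 = dist (c i) (c j) ^ 2) := by
  rintro ⟨c, r, hr, horth⟩
  have hnorm : ∀ i j : Fin 4, i ≠ j → ‖c i - c j‖ ^ 2 = r i ^ 2 + r j ^ 2 := by
    intro i j hij
    rw [← dist_eq_norm, ← horth i j hij]
  set v : Fin 3 → EuclideanSpace ℝ (Fin 2) := fun k => c k.succ - c 0 with hv
  have key : ∀ i j : Fin 3, i ≠ j → (inner ℝ (v i) (v j) : ℝ) = r 0 ^ 2 := by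
    intro i j hij
    have hij4 : (i.succ : Fin 4) ≠ j.succ := fun h => hij (Fin.succ_injective _ h)
    rw [hv]
    simp only
    rw [inner_sub_sub_helper, hnorm _ _ (Fin.succ_ne_zero i), hnorm _ _ (Fin.succ_ne_zero j),
      hnorm _ _ hij4]
    ring
  have keyd : ∀ i : Fin 3, (inner ℝ (v i) (v i) : ℝ) = r i.succ ^ 2 + r 0 ^ 2 := by
    intro i
    rw [hv]
    simp only
    rw [real_inner_self_eq_norm_sq, hnorm _ _ (Fin.succ_ne_zero i)]
  have hnli : ¬ LinearIndependent ℝ v := by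
    intro h
    have h3 := h.fintype_card_le_finrank
    rw [finrank_euclideanSpace_fin] at h3
    simp at h3
  obtain ⟨g, hg, i0, hgi0⟩ := Fintype.not_linearIndependent_iff.mp hnli
  have hinner : ∀ i : Fin 3, g 0 * (inner ℝ (v i) (v 0) : ℝ) + g 1 * (inner ℝ (v i) (v 1) : ℝ)
      + g 2 * (inner ℝ (v i) (v 2) : ℝ) = 0 := by
    intro i
    have h0 : (inner ℝ (v i) (∑ j, g j • v j) : ℝ) = 0 := by rw [hg, inner_zero_right]
    rw [inner_sum] at h0
    simp only [real_inner_smul_right] at h0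
    rw [Fin.sum_univ_three] at h0
    exact h0
  have e0 : g 0 * r (0 : Fin 3).succ ^ 2 + r 0 ^ 2 * (g 0 + g 1 + g 2) = 0 := by
    have h0 := hinner 0
    rw [keyd 0, key 0 1 (by decide), key 0 2 (by decide)] at h0
    linarith
  have e1 : g 1 * r (1 : Fin 3).succ ^ 2 + r 0 ^ 2 * (g 0 + g 1 + g 2) = 0 := by
    have h0 := hinner 1
    rw [key 1 0 (by decide), keyd 1, key 1 2 (by decide)] at h0
    linarith
  have e2 : g 2 * r (2 : Fin 3).succ ^ 2 + r 0 ^ 2 * (g 0 + g 1 + g 2) = 0 := by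
    have h0 := hinner 2
    rw [key 2 0 (by decide), key 2 1 (by decide), keyd 2] at h0
    linarith
  set ρ0 := r (0 : Fin 3).succ ^ 2
  set ρ1 := r (1 : Fin 3).succ ^ 2
  set ρ2 := r (2 : Fin 3).succ ^ 2
  have hρ0 : 0 < ρ0 := pow_pos (hr _) 2
  have hρ1 : 0 < ρ1 := pow_pos (hr _) 2
  have hρ2 : 0 < ρ2 := pow_pos (hr _) 2
  have hs : 0 < r 0 ^ 2 := pow_pos (hr _) 2
  have hS : (g 0 + g 1 + g 2) *
      (ρ0 * ρ1 * ρ2 + r 0 ^ 2 * (ρ1 * ρ2 + ρ0 * ρ2 + ρ0 * ρ1)) = 0 := by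
    linear_combination ρ1 * ρ2 * e0 + ρ0 * ρ2 * e1 + ρ0 * ρ1 * e2
  have hpos : 0 < ρ0 * ρ1 * ρ2 + r 0 ^ 2 * (ρ1 * ρ2 + ρ0 * ρ2 + ρ0 * ρ1) := by positivity
  have hS0 : g 0 + g 1 + g 2 = 0 := by
    rcases mul_eq_zero.mp hS with h | h
    · exact h
    · exact absurd h (ne_of_gt hpos)
  have hg0 : g 0 = 0 := by
    have := e0; rw [hS0] at this; nlinarith
  have hg1 : g 1 = 0 := by
    have := e1; rw [hS0] at this; nlinarith
  have hg2 : g 2 = 0 := by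
    have := e2; rw [hS0] at this; nlinarith
  have hall : ∀ i : Fin 3, g i = 0 := by
    intro i; fin_cases i
    exacts [hg0, hg1, hg2]
  exact hgi0 (hall i0)
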